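/- A vector φ in the Barnes Wall lattice BW_n is proportionally minimal (i.e., no cφ with 0 < |c| < 1 lies in BW_n) if and only if gcd over x ∈ {0,1}^n of the Gaussian integers (1−i)^n · ⟨x̃, φ⟩ is a unit of ℤ[i]. -/

import Mathlib

/-- Generator `|x̃⟩` of the Barnes Wall lattice: the tensor product of `|0⟩`
(where `x i = false`) and `(1/(1+i))(|0⟩+|1⟩)` (where `x i = true`). -/
noncomputable def bwGen (n : ℕ) (x : Fin n → Bool) :
    EuclideanSpace ℂ (Fin n → Fin 2) :=
  WithLp.toLp 2 (fun y => ∏ i : Fin n,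
    (if x i then (1 + Complex.I)⁻¹ else if y i = 0 then 1 else 0))

/-- Membership in the Barnes Wall lattice `BW_n`: the `ℤ[i]`-span of the `bwGen n x`. -/
def memBW (n : ℕ) (v : EuclideanSpace ℂ (Fin n → Fin 2)) : Prop :=
  ∃ a : (Fin n → Bool) → GaussianInt,
    v = ∑ x : Fin n → Bool, (GaussianInt.toComplex (a x)) • bwGen n x

open Complex GaussianInt

def gK : Bool → Bool → GaussianInt
  | false, false => ⟨1, -1⟩
  | false, true => ⟨0, -1⟩
  | true, false => 1
  | true, true => ⟨1, -1⟩

def hK : Bool → Bool → GaussianInt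
  | false, false => ⟨1, 1⟩
  | false, true => ⟨-1, 0⟩
  | true, false => ⟨0, -1⟩
  | true, true => ⟨1, 1⟩

lemma gh (s t : Bool) : ∑ w : Bool, gK s w * hK w t = if s = t then 1 else 0 := by
  cases s <;> cases t <;> decide

lemma hg (s t : Bool) : ∑ w : Bool, hK s w * gK w t = if s = t then 1 else 0 := by
  cases s <;> cases t <;> decide

lemma coord (s t : Bool) :
    (1 - Complex.I) * ∑ w : Fin 2,
      (starRingEnd ℂ) (if s then (1 + Complex.I)⁻¹ else if w = 0 then 1 else 0) *
      (if t then (1 + Complex.I)⁻¹ else if w = 0 then 1 else 0) = toComplex (gK s t) := by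
  have h1 : (1 + Complex.I) ≠ 0 := by
    intro h; have := congrArg Complex.im h; simp at this
  have h2 : (1 - Complex.I) ≠ 0 := by
    intro h; have := congrArg Complex.im h; simp at this
  have h2' : (1 : ℂ) + -Complex.I ≠ 0 := by rwa [← sub_eq_add_neg]
  have e1 : (1 - Complex.I) * (1 + Complex.I)⁻¹ = -Complex.I := by
    have e : (1 : ℂ) - Complex.I = -Complex.I * (1 + Complex.I) := by
      ring_nf; rw [Complex.I_sq]; ring
    rw [e, mul_assoc, mul_inv_cancel₀ h1, mul_one]
  have e3 : ((1:ℂ) + -Complex.I)⁻¹ * (1 + Complex.I)⁻¹ = 2⁻¹ := by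
    have e : ((1:ℂ) + -Complex.I) * (1 + Complex.I) = 2 := by
      ring_nf; rw [Complex.I_sq]; ring
    rw [← mul_inv, e]
  cases s <;> cases t <;>
    simp only [Fin.sum_univ_two, gK, toComplex_def', if_true, if_false, Bool.false_eq_true,
      ite_true, ite_false, Fin.isValue, show ((0:Fin 2) = 0) = True by simp,
      show ((1:Fin 2) = 0) = False by simp, map_inv₀, map_one, map_zero, map_add,
      Complex.conj_I]
  · push_cast; ring
  · rw [one_mul, zero_mul, add_zero, e1]; push_cast; ring
  · rw [mul_one, mul_zero, add_zero, sub_eq_add_neg, mul_inv_cancel₀ h2']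
  · rw [e3]; push_cast; norm_num [sub_eq_add_neg]

lemma inner_bwGen (n : ℕ) (x y : Fin n → Bool) :
    (1 - Complex.I) ^ n * (inner ℂ (bwGen n x) (bwGen n y) : ℂ)
      = toComplex (∏ i, gK (x i) (y i)) := by
  have h : (inner ℂ (bwGen n x) (bwGen n y) : ℂ)
      = ∏ i : Fin n, ∑ w : Fin 2,
        (starRingEnd ℂ) (if x i then (1 + Complex.I)⁻¹ else if w = 0 then 1 else 0) *
        (if y i then (1 + Complex.I)⁻¹ else if w = 0 then 1 else 0) := by
    rw [Finset.prod_univ_sum]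
    rw [show (Fintype.piFinset fun _ : Fin n => (Finset.univ : Finset (Fin 2))) = Finset.univ from
      Fintype.piFinset_univ]
    simp only [PiLp.inner_apply, RCLike.inner_apply', bwGen, map_prod, ← Finset.prod_mul_distrib]
  rw [h, map_prod, show ((1:ℂ)-Complex.I)^n = ∏ _i : Fin n, (1-Complex.I) by simp,
    ← Finset.prod_mul_distrib]
  exact Finset.prod_congr rfl fun i _ => coord (x i) (y i)

/-- product of Kronecker-type identities -/
lemma gram_inv {g' h' : Bool → Bool → GaussianInt}
    (hgh : ∀ s t, ∑ w : Bool, g' s w * h' w t = if s = t then 1 else 0)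
    (n : ℕ) (x z : Fin n → Bool) :
    ∑ y : Fin n → Bool, (∏ i, g' (x i) (y i)) * ∏ i, h' (y i) (z i)
      = if x = z then 1 else 0 := by
  have h : ∑ y : Fin n → Bool, (∏ i, g' (x i) (y i)) * ∏ i, h' (y i) (z i)
      = ∏ i : Fin n, ∑ w : Bool, g' (x i) w * h' w (z i) := by
    rw [Finset.prod_univ_sum]
    rw [show (Fintype.piFinset fun _ : Fin n => (Finset.univ : Finset Bool)) = Finset.univ from
      Fintype.piFinset_univ]
    exact Finset.sum_congr rfl fun y _ => (Finset.prod_mul_distrib).symm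
  rw [h]
  by_cases hxz : x = z
  · subst hxz; simp only [hgh]; simp
  · obtain ⟨i, hi⟩ := Function.ne_iff.mp hxz
    rw [if_neg hxz]
    exact Finset.prod_eq_zero (Finset.mem_univ i) (by rw [hgh, if_neg hi])

lemma pair (n : ℕ) (b : (Fin n → Bool) → GaussianInt) (x : Fin n → Bool) :
    (1 - Complex.I) ^ n *
      (inner ℂ (bwGen n x) (∑ y : Fin n → Bool, (toComplex (b y)) • bwGen n y) : ℂ)
      = toComplex (∑ y : Fin n → Bool, (∏ i, gK (x i) (y i)) * b y) := by
  rw [inner_sum, Finset.mul_sum, map_sum]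
  refine Finset.sum_congr rfl fun y _ => ?_
  rw [inner_smul_right, toComplex_mul, ← inner_bwGen n x y]
  ring

lemma recover (n : ℕ) (b a : (Fin n → Bool) → GaussianInt)
    (hab : ∀ x, a x = ∑ y : Fin n → Bool, (∏ i, gK (x i) (y i)) * b y)
    (z : Fin n → Bool) :
    b z = ∑ x : Fin n → Bool, (∏ i, hK (z i) (x i)) * a x := by
  have h : ∑ x : Fin n → Bool, (∏ i, hK (z i) (x i)) * a x
      = ∑ y : Fin n → Bool,
          (∑ x : Fin n → Bool, (∏ i, hK (z i) (x i)) * ∏ i, gK (x i) (y i)) * b y := by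
    simp only [hab, Finset.mul_sum, Finset.sum_mul]
    rw [Finset.sum_comm]
    exact Finset.sum_congr rfl fun x _ => Finset.sum_congr rfl fun y _ => by ring
  rw [h]
  simp only [gram_inv hg n]
  simp [Finset.sum_ite_eq' Finset.univ z (fun y => b y)]

theorem stmt_12 (n : ℕ) (φ : EuclideanSpace ℂ (Fin n → Fin 2))
    (hφ : memBW n φ)
    (a : (Fin n → Bool) → GaussianInt)
    (ha : ∀ x, GaussianInt.toComplex (a x) =
      (1 - Complex.I) ^ n * (inner ℂ (bwGen n x) φ : ℂ)) :
    (∀ c : ℂ, c ≠ 0 → ‖c‖ < 1 → ¬ memBW n (c • φ)) ↔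
      (∀ p : GaussianInt, (∀ x, p ∣ a x) → IsUnit p) := by
  obtain ⟨b, hb⟩ := hφ
  have hab : ∀ x, a x = ∑ y : Fin n → Bool, (∏ i, gK (x i) (y i)) * b y := by
    intro x
    apply toComplex_inj.mp
    rw [ha x, hb, pair]
  constructor
  · intro hmin p hp
    by_contra hpu
    rcases eq_or_ne p 0 with h0 | h0
    · -- p = 0 : all a x = 0, so φ = 0, contradicting minimality with c = 1/2
      subst h0
      have haz : ∀ x, a x = 0 := fun x => zero_dvd_iff.mp (hp x)
      have hbz : ∀ z, b z = 0 := by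
        intro z
        rw [recover n b a hab z]
        simp [haz]
      have hφ0 : φ = 0 := by
        rw [hb]
        simp [hbz]
      refine hmin (1/2) (by norm_num) (by norm_num) ?_
      refine ⟨0, ?_⟩
      simp [hφ0]
    · -- p ≠ 0 nonunit: c = p⁻¹ gives a smaller vector in BW
      have hpc : toComplex p ≠ 0 := fun h => h0 (toComplex_eq_zero.mp h)
      have hn2 : (2 : ℤ) ≤ p.norm := by
        have hge := norm_nonneg p
        have h0' : p.norm ≠ 0 := fun h => h0 (norm_eq_zero.mp h)
        have h1' : p.norm ≠ 1 := fun h => hpu ((Zsqrtd.norm_eq_one_iff' (by norm_num) p).mp h)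
        omega
      have hnormp : 1 < ‖toComplex p‖ := by
        have h1 : ‖toComplex p‖ ^ 2 = (p.norm : ℝ) := by
          rw [Complex.sq_norm, ← intCast_real_norm]
        nlinarith [norm_nonneg (toComplex p), (by exact_mod_cast hn2 : (2:ℝ) ≤ (p.norm : ℝ))]
      set c : ℂ := (toComplex p)⁻¹ with hc
      have hcne : c ≠ 0 := inv_ne_zero hpc
      have hclt : ‖c‖ < 1 := by
        rw [hc, norm_inv]
        rw [inv_lt_one_iff₀]
        right; exact hnormp
      refine hmin c hcne hclt ?_
      choose q hq using hp
      refine ⟨fun z => ∑ x : Fin n → Bool, (∏ i, hK (z i) (x i)) * q x, ?_⟩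
      have hbz : ∀ z, b z = p * ∑ x : Fin n → Bool, (∏ i, hK (z i) (x i)) * q x := by
        intro z
        rw [recover n b a hab z, Finset.mul_sum]
        exact Finset.sum_congr rfl fun x _ => by rw [hq x]; ring
      rw [hb, Finset.smul_sum]
      refine Finset.sum_congr rfl fun z _ => ?_
      rw [smul_smul, hbz z, toComplex_mul, hc, ← mul_assoc, inv_mul_cancel₀ hpc, one_mul]
  · intro hgcd c hcne hclt hmem
    obtain ⟨b', hb'⟩ := hmem
    set a' : (Fin n → Bool) → GaussianInt :=
      fun x => ∑ y : Fin n → Bool, (∏ i, gK (x i) (y i)) * b' y with ha'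
    have ha'c : ∀ x, toComplex (a' x) = c * toComplex (a x) := by
      intro x
      rw [ha', ← pair n b' x, ← hb', inner_smul_right, ha x]
      ring
    -- Bezout
    obtain ⟨d, hd⟩ := Submodule.IsPrincipal.principal (Ideal.span (Set.range a))
    have hdvd : ∀ x, d ∣ a x := by
      intro x
      have : a x ∈ Ideal.span (Set.range a) := Ideal.subset_span (Set.mem_range_self x)
      rw [hd] at this
      exact (Ideal.mem_span_singleton).mp this
    have hdu : IsUnit d := hgcd d hdvd
    have h1 : (1 : GaussianInt) ∈ Ideal.span (Set.range a) := by
      rw [hd, Ideal.submodule_span_eq, Ideal.span_singleton_eq_top.mpr hdu]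
      trivial
    obtain ⟨u, hu⟩ := (Submodule.mem_span_range_iff_exists_fun _).mp h1
    set qq : GaussianInt := ∑ x : Fin n → Bool, u x * a' x with hqq
    have hqc : toComplex qq = c := by
      rw [hqq, map_sum]
      have : ∑ x : Fin n → Bool, toComplex (u x * a' x)
          = c * toComplex (∑ x : Fin n → Bool, u x * a x) := by
        rw [map_sum, Finset.mul_sum]
        exact Finset.sum_congr rfl fun x _ => by
          rw [toComplex_mul, toComplex_mul, ha'c x]; ring
      rw [this, show ∑ x : Fin n → Bool, u x * a x = 1 from by simpa [smul_eq_mul] using hu,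
        toComplex_one, mul_one]
    have hqne : qq ≠ 0 := by
      intro h
      rw [h, toComplex_zero] at hqc
      exact hcne hqc.symm
    have : (1 : ℤ) ≤ qq.norm := norm_pos.mpr hqne
    have h1 : (1 : ℝ) ≤ ‖c‖ ^ 2 := by
      rw [← hqc, Complex.sq_norm, ← intCast_real_norm]
      exact_mod_cast this
    nlinarith [norm_nonneg c]
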